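/- Included moves cannot be better: let G be a relevant position of the game influence. If y, y' ∈ R(G) with y' ∈ Rmv(G,y), then s^L_1(G_{y'}) ≥ s^L_1(G_y); if x, x' ∈ L(G) with x' ∈ Rmv(G,x), then s^R_1(G_{x'}) ≥ s^R_1(G_x). -/

import Mathlib

namespace Influence

open Finset

/-- A position of the game `influence`: a finite directed graph with vertex set `V`,
arc set `A`, and the set `left` of Left (black) vertices; Right's vertices are `V \ left`. -/
structure Pos (α : Type) [DecidableEq α] where
  V : Finset α
  A : Finset (α × α)
  left : Finset α

variable {α : Type} [DecidableEq α]

namespace Pos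

/-- The set of Right vertices. -/
def R (G : Pos α) : Finset α := G.V \ G.left

/-- Well-formedness: arcs join vertices, and Left vertices are vertices. -/
def WF (G : Pos α) : Prop :=
  (∀ p ∈ G.A, p.1 ∈ G.V ∧ p.2 ∈ G.V) ∧ G.left ⊆ G.V

open Classical in
/-- `Succ G x`: vertices reachable from `x` by a directed path (including `x` itself). -/
noncomputable def Succ (G : Pos α) (x : α) : Finset α :=
  G.V.filter (fun z => Relation.ReflTransGen (fun a b => (a, b) ∈ G.A) x z)

open Classical in
/-- `Pred G y`: vertices from which `y` is reachable by a directed path (including `y`). -/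
noncomputable def Pred (G : Pos α) (y : α) : Finset α :=
  G.V.filter (fun z => Relation.ReflTransGen (fun a b => (a, b) ∈ G.A) z y)

open Classical in
noncomputable def ForcL (G : Pos α) : Finset α :=
  G.left.filter (fun x => G.Succ x ⊆ G.left)

open Classical in
noncomputable def ForcR (G : Pos α) : Finset α :=
  G.R.filter (fun y => G.Pred y ⊆ G.R)

noncomputable def Forc (G : Pos α) : Finset α := G.ForcL ∪ G.ForcR

/-- A relevant position: no forced vertices. -/
def Relevant (G : Pos α) : Prop := G.Forc = ∅

/-- The induced subgraph `G ∖ S` on `V(G) \ S`. -/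
def erase (G : Pos α) (S : Finset α) : Pos α :=
  ⟨G.V \ S, G.A.filter (fun p => p.1 ∈ G.V \ S ∧ p.2 ∈ G.V \ S), G.left \ S⟩

open Classical in
/-- The set of vertices removed when playing `x`:  for `x ∈ L`,
`Rmv(G,x) = Succ(G,x) ∪ Forc(G ∖ Succ(G,x))`; for `y ∈ R`,
`Rmv(G,y) = Pred(G,y) ∪ Forc(G ∖ Pred(G,y))`. -/
noncomputable def Rmv (G : Pos α) (x : α) : Finset α :=
  if x ∈ G.left then G.Succ x ∪ (G.erase (G.Succ x)).Forc
  else G.Pred x ∪ (G.erase (G.Pred x)).Forc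

/-- The resulting relevant position `G_x` after the move `x`. -/
noncomputable def move (G : Pos α) (x : α) : Pos α := G.erase (G.Rmv x)

mutual
/-- Auxiliary (fuel-indexed) score of Left playing first. -/
noncomputable def sL1Aux : ℕ → Pos α → ℕ
  | 0, _ => 0
  | k + 1, G =>
      if G.left.Nonempty then
        G.left.sup (fun x => (G.Rmv x).card + sL2Aux k (G.move x))
      else 0

/-- Auxiliary (fuel-indexed) score of Left playing second. -/
noncomputable def sL2Aux : ℕ → Pos α → ℕ
  | 0, _ => 0
  | k + 1, G =>
      if h : G.R.Nonempty then G.R.inf' h (fun y => sL1Aux k (G.move y))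
      else 0
end

mutual
/-- Auxiliary (fuel-indexed) score of Right playing first. -/
noncomputable def sR1Aux : ℕ → Pos α → ℕ
  | 0, _ => 0
  | k + 1, G =>
      if G.R.Nonempty then
        G.R.sup (fun y => (G.Rmv y).card + sR2Aux k (G.move y))
      else 0

/-- Auxiliary (fuel-indexed) score of Right playing second. -/
noncomputable def sR2Aux : ℕ → Pos α → ℕ
  | 0, _ => 0
  | k + 1, G =>
      if h : G.left.Nonempty then G.left.inf' h (fun x => sR1Aux k (G.move x))
      else 0
end

/-- `s^L_1(G)`: the score of Left when Left plays first (optimal play). -/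
noncomputable def sL1 (G : Pos α) : ℕ := sL1Aux G.V.card G

/-- `s^L_2(G)`: the score of Left when Right plays first (optimal play). -/
noncomputable def sL2 (G : Pos α) : ℕ := sL2Aux G.V.card G

/-- `s^R_1(G)`: the score of Right when Right plays first (optimal play). -/
noncomputable def sR1 (G : Pos α) : ℕ := sR1Aux G.V.card G

/-- `s^R_2(G)`: the score of Right when Left plays first (optimal play). -/
noncomputable def sR2 (G : Pos α) : ℕ := sR2Aux G.V.card G

/-- The Left score `Ls(G) = s^L_1(G) - s^R_2(G)`. -/
noncomputable def Ls (G : Pos α) : ℤ := (G.sL1 : ℤ) - (G.sR2 : ℤ)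

/-- The Right score `Rs(G) = s^L_2(G) - s^R_1(G)`. -/
noncomputable def Rs (G : Pos α) : ℤ := (G.sL2 : ℤ) - (G.sR1 : ℤ)

/-- Disjoint union (game sum) of two positions. -/
def union (G G' : Pos α) : Pos α := ⟨G.V ∪ G'.V, G.A ∪ G'.A, G.left ∪ G'.left⟩

/-- The empty position. -/
protected def empty : Pos α := ⟨∅, ∅, ∅⟩

/-! ### Basics -/

/-- Reachability relation of a position. -/
def Reach (G : Pos α) (a b : α) : Prop :=
  Relation.ReflTransGen (fun a b => (a, b) ∈ G.A) a b

lemma mem_Succ {G : Pos α} {x z : α} : z ∈ G.Succ x ↔ z ∈ G.V ∧ G.Reach x z := by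
  classical simp [Succ, Reach, Finset.mem_filter]

lemma mem_Pred {G : Pos α} {y z : α} : z ∈ G.Pred y ↔ z ∈ G.V ∧ G.Reach z y := by
  classical simp [Pred, Reach, Finset.mem_filter]

lemma mem_R {G : Pos α} {z : α} : z ∈ G.R ↔ z ∈ G.V ∧ z ∉ G.left := by
  simp [R, Finset.mem_sdiff]

lemma mem_Succ_self {G : Pos α} {x : α} (hx : x ∈ G.V) : x ∈ G.Succ x :=
  mem_Succ.2 ⟨hx, Relation.ReflTransGen.refl⟩

lemma mem_Pred_self {G : Pos α} {y : α} (hy : y ∈ G.V) : y ∈ G.Pred y :=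
  mem_Pred.2 ⟨hy, Relation.ReflTransGen.refl⟩

lemma Pred_subset_V {G : Pos α} {y : α} : G.Pred y ⊆ G.V := by
  classical exact Finset.filter_subset _ _

lemma Succ_subset_V {G : Pos α} {x : α} : G.Succ x ⊆ G.V := by
  classical exact Finset.filter_subset _ _

lemma reach_src_mem {G : Pos α} (hwf : G.WF) {a b : α} (h : G.Reach a b) (hne : a ≠ b) :
    a ∈ G.V := by
  rcases h.cases_head with h | ⟨c, hac, _⟩
  · exact absurd h hne
  · exact (hwf.1 _ hac).1

lemma reach_tgt_mem {G : Pos α} (hwf : G.WF) {a b : α} (h : G.Reach a b) (hne : a ≠ b) :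
    b ∈ G.V := by
  rcases h.cases_tail with h | ⟨c, _, hcb⟩
  · exact absurd h.symm hne
  · exact (hwf.1 _ hcb).2

lemma Pred_eq_empty {G : Pos α} (hwf : G.WF) {z : α} (hz : z ∉ G.V) : G.Pred z = ∅ := by
  ext u
  simp only [mem_Pred, Finset.notMem_empty, iff_false, not_and]
  intro hu hr
  rcases eq_or_ne u z with rfl | hne
  · exact hz hu
  · exact hz (reach_tgt_mem hwf hr hne)

lemma Succ_eq_empty {G : Pos α} (hwf : G.WF) {z : α} (hz : z ∉ G.V) : G.Succ z = ∅ := by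
  ext u
  simp only [mem_Succ, Finset.notMem_empty, iff_false, not_and]
  intro hu hr
  rcases eq_or_ne z u with rfl | hne
  · exact hz hu
  · exact hz (reach_src_mem hwf hr hne)

/-- A set is `PredClosed` if it contains the sources of arcs into it. -/
def PredClosed (G : Pos α) (S : Finset α) : Prop := ∀ p ∈ G.A, p.2 ∈ S → p.1 ∈ S

def SuccClosed (G : Pos α) (S : Finset α) : Prop := ∀ p ∈ G.A, p.1 ∈ S → p.2 ∈ S

lemma PredClosed.reach {G : Pos α} {S : Finset α} (hcl : G.PredClosed S) {a b : α}
    (h : G.Reach a b) (hb : b ∈ S) : a ∈ S := by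
  induction h with
  | refl => exact hb
  | tail _ hbc ih => exact ih (hcl _ hbc hb)

lemma SuccClosed.reach {G : Pos α} {S : Finset α} (hcl : G.SuccClosed S) {a b : α}
    (h : G.Reach a b) (ha : a ∈ S) : b ∈ S := by
  induction h with
  | refl => exact ha
  | tail _ hbc ih => exact hcl _ hbc ih

lemma Pred_predClosed {G : Pos α} (hwf : G.WF) (y : α) : G.PredClosed (G.Pred y) := by
  rintro ⟨a, b⟩ hab hb
  rcases mem_Pred.1 hb with ⟨_, hr⟩
  exact mem_Pred.2 ⟨(hwf.1 _ hab).1, Relation.ReflTransGen.head hab hr⟩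

lemma Succ_succClosed {G : Pos α} (hwf : G.WF) (x : α) : G.SuccClosed (G.Succ x) := by
  rintro ⟨a, b⟩ hab ha
  rcases mem_Succ.1 ha with ⟨_, hr⟩
  exact mem_Succ.2 ⟨(hwf.1 _ hab).2, hr.tail hab⟩

/-! ### erase lemmas -/

@[simp] lemma erase_V {G : Pos α} {S : Finset α} : (G.erase S).V = G.V \ S := rfl
@[simp] lemma erase_left {G : Pos α} {S : Finset α} : (G.erase S).left = G.left \ S := rfl

lemma mem_erase_A {G : Pos α} {S : Finset α} {p : α × α} :
    p ∈ (G.erase S).A ↔ p ∈ G.A ∧ p.1 ∈ G.V \ S ∧ p.2 ∈ G.V \ S := by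
  simp [erase, Finset.mem_filter]

lemma erase_R {G : Pos α} {S : Finset α} : (G.erase S).R = G.R \ S := by
  ext z; simp only [R, erase_V, erase_left, Finset.mem_sdiff]; tauto

lemma erase_WF {G : Pos α} (hwf : G.WF) (S : Finset α) : (G.erase S).WF := by
  constructor
  · intro p hp
    rcases mem_erase_A.1 hp with ⟨_, h1, h2⟩
    exact ⟨h1, h2⟩
  · exact Finset.sdiff_subset_sdiff hwf.2 (le_refl S)

lemma reach_erase_mono {G : Pos α} {S : Finset α} {a b : α} (h : (G.erase S).Reach a b) :
    G.Reach a b :=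
  by unfold Reach at *; exact Relation.ReflTransGen.mono (fun _ _ hp => (mem_erase_A.1 hp).1) a b h

lemma reach_erase_of_predClosed {G : Pos α} (hwf : G.WF) {S : Finset α}
    (hcl : G.PredClosed S) {a b : α} (ha : a ∉ S) (hb : b ∈ G.V) (h : G.Reach a b) :
    (G.erase S).Reach a b := by
  induction h using Relation.ReflTransGen.head_induction_on with
  | refl => exact Relation.ReflTransGen.refl
  | head hac hcb ih =>
    rename_i a' c'
    have hc' : c' ∉ S := fun hc => ha (hcl _ hac hc)
    have hcV : c' ∈ G.V := (hwf.1 _ hac).2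
    refine Relation.ReflTransGen.head ?_ (ih hc')
    exact mem_erase_A.2 ⟨hac, Finset.mem_sdiff.2 ⟨(hwf.1 _ hac).1, ha⟩,
      Finset.mem_sdiff.2 ⟨hcV, hc'⟩⟩

lemma reach_erase_of_succClosed {G : Pos α} (hwf : G.WF) {S : Finset α}
    (hcl : G.SuccClosed S) {a b : α} (hb : b ∉ S) (ha : a ∈ G.V) (h : G.Reach a b) :
    (G.erase S).Reach a b := by
  induction h with
  | refl => exact Relation.ReflTransGen.refl
  | tail hac hcb ih =>
    rename_i c' b'
    have hc' : c' ∉ S := fun hc => hb (hcl _ hcb hc)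
    have hcV : c' ∈ G.V := (hwf.1 _ hcb).1
    refine Relation.ReflTransGen.tail (ih hc') ?_
    exact mem_erase_A.2 ⟨hcb, Finset.mem_sdiff.2 ⟨hcV, hc'⟩,
      Finset.mem_sdiff.2 ⟨(hwf.1 _ hcb).2, hb⟩⟩

lemma Pred_erase_of_predClosed {G : Pos α} (hwf : G.WF) {S : Finset α}
    (hcl : G.PredClosed S) {z : α} : (G.erase S).Pred z = G.Pred z \ S := by
  ext u
  simp only [mem_Pred, Finset.mem_sdiff, erase_V]
  constructor
  · rintro ⟨⟨hu, huS⟩, hr⟩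
    exact ⟨⟨hu, reach_erase_mono hr⟩, huS⟩
  · rintro ⟨⟨hu, hr⟩, huS⟩
    rcases eq_or_ne u z with rfl | hne
    · exact ⟨⟨hu, huS⟩, Relation.ReflTransGen.refl⟩
    · exact ⟨⟨hu, huS⟩, reach_erase_of_predClosed hwf hcl huS (reach_tgt_mem hwf hr hne) hr⟩

lemma Succ_erase_of_predClosed {G : Pos α} (hwf : G.WF) {S : Finset α}
    (hcl : G.PredClosed S) {z : α} (hz : z ∉ S) : (G.erase S).Succ z = G.Succ z := by
  ext w
  simp only [mem_Succ, Finset.mem_sdiff, erase_V]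
  constructor
  · rintro ⟨⟨hw, _⟩, hr⟩
    exact ⟨hw, reach_erase_mono hr⟩
  · rintro ⟨hw, hr⟩
    have hwS : w ∉ S := fun h => hz (hcl.reach hr h)
    exact ⟨⟨hw, hwS⟩, reach_erase_of_predClosed hwf hcl hz hw hr⟩

lemma Succ_erase_of_succClosed {G : Pos α} (hwf : G.WF) {S : Finset α}
    (hcl : G.SuccClosed S) {z : α} : (G.erase S).Succ z = G.Succ z \ S := by
  ext u
  simp only [mem_Succ, Finset.mem_sdiff, erase_V]
  constructor
  · rintro ⟨⟨hu, huS⟩, hr⟩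
    exact ⟨⟨hu, reach_erase_mono hr⟩, huS⟩
  · rintro ⟨⟨hu, hr⟩, huS⟩
    rcases eq_or_ne z u with rfl | hne
    · exact ⟨⟨hu, huS⟩, Relation.ReflTransGen.refl⟩
    · exact ⟨⟨hu, huS⟩, reach_erase_of_succClosed hwf hcl huS (reach_src_mem hwf hr hne) hr⟩

lemma Pred_erase_of_succClosed {G : Pos α} (hwf : G.WF) {S : Finset α}
    (hcl : G.SuccClosed S) {z : α} (hz : z ∉ S) : (G.erase S).Pred z = G.Pred z := by
  ext w
  simp only [mem_Pred, Finset.mem_sdiff, erase_V]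
  constructor
  · rintro ⟨⟨hw, _⟩, hr⟩
    exact ⟨hw, reach_erase_mono hr⟩
  · rintro ⟨hw, hr⟩
    have hwS : w ∉ S := fun h => hz (hcl.reach hr h)
    exact ⟨⟨hw, hwS⟩, reach_erase_of_succClosed hwf hcl hz hw hr⟩

lemma pos_ext {G H : Pos α} (h1 : G.V = H.V) (h2 : G.A = H.A) (h3 : G.left = H.left) :
    G = H := by
  cases G; cases H; simp_all

lemma erase_erase {G : Pos α} {S T : Finset α} :
    (G.erase S).erase T = G.erase (S ∪ T) := by
  have hV : (G.V \ S) \ T = G.V \ (S ∪ T) := by ext z; simp [Finset.mem_sdiff]; tauto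
  have hL : (G.left \ S) \ T = G.left \ (S ∪ T) := by ext z; simp [Finset.mem_sdiff]; tauto
  refine pos_ext hV ?_ hL
  ext ⟨a, b⟩
  simp only [erase, Finset.mem_filter, Finset.mem_sdiff, Finset.mem_union]
  tauto

/-! ### Characterization of Rmv for Right moves -/

lemma mem_ForcL {G : Pos α} {x : α} : x ∈ G.ForcL ↔ x ∈ G.left ∧ G.Succ x ⊆ G.left := by
  classical simp [ForcL, Finset.mem_filter]

lemma mem_ForcR {G : Pos α} {y : α} : y ∈ G.ForcR ↔ y ∈ G.R ∧ G.Pred y ⊆ G.R := by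
  classical simp [ForcR, Finset.mem_filter]

lemma Relevant.not_forcL {G : Pos α} (hrel : G.Relevant) {x : α} (hx : x ∈ G.left)
    (hs : G.Succ x ⊆ G.left) : False := by
  have : x ∈ G.Forc := Finset.mem_union_left _ (mem_ForcL.2 ⟨hx, hs⟩)
  rw [hrel] at this
  exact absurd this (Finset.notMem_empty x)

lemma Relevant.not_forcR {G : Pos α} (hrel : G.Relevant) {y : α} (hy : y ∈ G.R)
    (hs : G.Pred y ⊆ G.R) : False := by
  have : y ∈ G.Forc := Finset.mem_union_right _ (mem_ForcR.2 ⟨hy, hs⟩)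
  rw [hrel] at this
  exact absurd this (Finset.notMem_empty y)

open Classical in
/-- The key characterization: for a relevant position and `y ∈ R`,
`Rmv G y` is the set of vertices all of whose Left predecessors are predecessors of `y`. -/
lemma Rmv_char {G : Pos α} (hwf : G.WF) (hrel : G.Relevant) {y : α} (hy : y ∈ G.R) :
    G.Rmv y = G.V.filter (fun z => ∀ u ∈ G.Pred z, u ∈ G.left → u ∈ G.Pred y) := by
  classical
  have hyl : y ∉ G.left := (mem_R.1 hy).2
  have hP : G.PredClosed (G.Pred y) := Pred_predClosed hwf y
  rw [Rmv, if_neg hyl]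
  set P := G.Pred y with hPdef
  have hFL : (G.erase P).ForcL = ∅ := by
    rw [Finset.eq_empty_iff_forall_notMem]
    intro x hx
    rcases mem_ForcL.1 hx with ⟨hxl, hs⟩
    rw [erase_left, Finset.mem_sdiff] at hxl
    rw [Succ_erase_of_predClosed hwf hP hxl.2] at hs
    exact hrel.not_forcL hxl.1 (hs.trans (by rw [erase_left]; exact Finset.sdiff_subset))
  ext z
  simp only [Finset.mem_union, Finset.mem_filter]
  constructor
  · rintro (hz | hz)
    · refine ⟨Pred_subset_V hz, fun u hu _ => ?_⟩
      rcases mem_Pred.1 hu with ⟨huV, hr⟩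
      rcases mem_Pred.1 hz with ⟨_, hr2⟩
      exact mem_Pred.2 ⟨huV, hr.trans hr2⟩
    · rw [Forc, hFL, Finset.empty_union] at hz
      rcases mem_ForcR.1 hz with ⟨hzR, hs⟩
      rw [erase_R, Finset.mem_sdiff] at hzR
      refine ⟨(mem_R.1 hzR.1).1, fun u hu hul => ?_⟩
      by_contra huP
      have : u ∈ (G.erase P).Pred z := by
        rw [Pred_erase_of_predClosed hwf hP]
        exact Finset.mem_sdiff.2 ⟨hu, huP⟩
      have := hs this
      rw [erase_R, Finset.mem_sdiff, mem_R] at this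
      exact this.1.2 hul
  · rintro ⟨hzV, hcond⟩
    by_cases hzP : z ∈ P
    · exact Or.inl hzP
    · refine Or.inr ?_
      rw [Forc, hFL, Finset.empty_union]
      have hzl : z ∉ G.left := fun hzl => hzP (hcond z (mem_Pred_self hzV) hzl)
      refine mem_ForcR.2 ⟨?_, ?_⟩
      · rw [erase_R, Finset.mem_sdiff]
        exact ⟨mem_R.2 ⟨hzV, hzl⟩, hzP⟩
      · intro u hu
        rw [Pred_erase_of_predClosed hwf hP, Finset.mem_sdiff] at hu
        rw [erase_R, Finset.mem_sdiff]
        have hul : u ∉ G.left := fun hul => hu.2 (hcond u hu.1 hul)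
        exact ⟨mem_R.2 ⟨Pred_subset_V hu.1, hul⟩, hu.2⟩

/-- Convenient membership form of the characterization. -/
lemma mem_Rmv_iff {G : Pos α} (hwf : G.WF) (hrel : G.Relevant) {y : α} (hy : y ∈ G.R) {z : α} :
    z ∈ G.Rmv y ↔ z ∈ G.V ∧ ∀ u ∈ G.Pred z, u ∈ G.left → u ∈ G.Pred y := by
  classical rw [Rmv_char hwf hrel hy]; simp [Finset.mem_filter]

lemma Rmv_subset_V {G : Pos α} (hwf : G.WF) (hrel : G.Relevant) {y : α} (hy : y ∈ G.R) :
    G.Rmv y ⊆ G.V := fun z hz => ((mem_Rmv_iff hwf hrel hy).1 hz).1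

lemma Pred_subset_Rmv {G : Pos α} (hwf : G.WF) (hrel : G.Relevant) {y : α} (hy : y ∈ G.R) :
    G.Pred y ⊆ G.Rmv y := by
  intro z hz
  refine (mem_Rmv_iff hwf hrel hy).2 ⟨Pred_subset_V hz, fun u hu _ => ?_⟩
  rcases mem_Pred.1 hu with ⟨huV, hr⟩
  rcases mem_Pred.1 hz with ⟨_, hr2⟩
  exact mem_Pred.2 ⟨huV, hr.trans hr2⟩

lemma self_mem_Rmv {G : Pos α} (hwf : G.WF) (hrel : G.Relevant) {y : α} (hy : y ∈ G.R) :
    y ∈ G.Rmv y :=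
  Pred_subset_Rmv hwf hrel hy (mem_Pred_self (mem_R.1 hy).1)

lemma Rmv_predClosed {G : Pos α} (hwf : G.WF) (hrel : G.Relevant) {y : α} (hy : y ∈ G.R) :
    G.PredClosed (G.Rmv y) := by
  intro p hp h2
  rcases (mem_Rmv_iff hwf hrel hy).1 h2 with ⟨h2V, hcond⟩
  refine (mem_Rmv_iff hwf hrel hy).2 ⟨(hwf.1 _ hp).1, fun u hu hul => ?_⟩
  rcases mem_Pred.1 hu with ⟨huV, hr⟩
  exact hcond u (mem_Pred.2 ⟨huV, hr.tail hp⟩) hul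

/-- Left vertices in `Rmv G y` are exactly the Left predecessors of `y`. -/
lemma Rmv_inter_left {G : Pos α} (hwf : G.WF) (hrel : G.Relevant) {y : α} (hy : y ∈ G.R)
    {z : α} (hz : z ∈ G.Rmv y) (hzl : z ∈ G.left) : z ∈ G.Pred y := by
  rcases (mem_Rmv_iff hwf hrel hy).1 hz with ⟨hzV, hcond⟩
  exact hcond z (mem_Pred_self hzV) hzl

/-! ### move basics (Right side) -/

@[simp] lemma move_V {G : Pos α} {y : α} : (G.move y).V = G.V \ G.Rmv y := rfl
@[simp] lemma move_left {G : Pos α} {y : α} : (G.move y).left = G.left \ G.Rmv y := rfl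
lemma move_R {G : Pos α} {y : α} : (G.move y).R = G.R \ G.Rmv y := erase_R

lemma move_WF {G : Pos α} (hwf : G.WF) (y : α) : (G.move y).WF := erase_WF hwf _

lemma card_move_lt_right {G : Pos α} (hwf : G.WF) (hrel : G.Relevant) {y : α} (hy : y ∈ G.R) :
    (G.move y).V.card < G.V.card := by
  refine Finset.card_lt_card ⟨Finset.sdiff_subset, fun hsub => ?_⟩
  have : y ∈ G.V \ G.Rmv y := hsub (mem_R.1 hy).1
  exact (Finset.mem_sdiff.1 this).2 (self_mem_Rmv hwf hrel hy)

lemma move_relevant_right {G : Pos α} (hwf : G.WF) (hrel : G.Relevant) {y : α} (hy : y ∈ G.R) :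
    (G.move y).Relevant := by
  have hcl := Rmv_predClosed hwf hrel hy
  rw [Relevant, Forc, Finset.eq_empty_iff_forall_notMem]
  intro w hw
  rcases Finset.mem_union.1 hw with hw | hw
  · rcases mem_ForcL.1 hw with ⟨hwl, hs⟩
    rw [move_left, Finset.mem_sdiff] at hwl
    rw [move, Succ_erase_of_predClosed hwf hcl hwl.2] at hs
    exact hrel.not_forcL hwl.1 (hs.trans (by rw [erase_left]; exact Finset.sdiff_subset))
  · rcases mem_ForcR.1 hw with ⟨hwR, hs⟩
    rw [move_R, Finset.mem_sdiff] at hwR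
    refine hwR.2 ((mem_Rmv_iff hwf hrel hy).2 ⟨(mem_R.1 hwR.1).1, fun u hu hul => ?_⟩)
    by_cases huRm : u ∈ G.Rmv y
    · exact Rmv_inter_left hwf hrel hy huRm hul
    · have : u ∈ (G.move y).Pred w := by
        rw [move, Pred_erase_of_predClosed hwf hcl]
        exact Finset.mem_sdiff.2 ⟨hu, huRm⟩
      have := hs this
      rw [move_R, Finset.mem_sdiff, mem_R] at this
      exact absurd hul this.1.2

/-! ### The opposite position: swap Left and Right -/

/-- The opposite position: arcs reversed, Left and Right exchanged. -/
def op (G : Pos α) : Pos α := ⟨G.V, G.A.image Prod.swap, G.V \ G.left⟩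

@[simp] lemma op_V {G : Pos α} : (op G).V = G.V := rfl
@[simp] lemma op_left {G : Pos α} : (op G).left = G.R := rfl

lemma mem_op_A {G : Pos α} {a b : α} : (a, b) ∈ (op G).A ↔ (b, a) ∈ G.A := by
  constructor
  · intro h
    rcases Finset.mem_image.1 h with ⟨⟨c, d⟩, hcd, hs⟩
    obtain ⟨rfl, rfl⟩ : d = a ∧ c = b := by
      simpa [Prod.ext_iff] using hs
    exact hcd
  · intro h
    exact Finset.mem_image.2 ⟨(b, a), h, rfl⟩

lemma op_R {G : Pos α} (hwf : G.WF) : (op G).R = G.left := by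
  ext z
  simp only [R, op_V, op_left, Finset.mem_sdiff, not_and, not_not]
  constructor
  · rintro ⟨hz, h⟩; exact h hz
  · intro hz; exact ⟨hwf.2 hz, fun _ => hz⟩

lemma op_WF {G : Pos α} (hwf : G.WF) : (op G).WF := by
  constructor
  · rintro ⟨a, b⟩ hab
    rcases (hwf.1 _ (mem_op_A.1 hab)) with ⟨h1, h2⟩
    exact ⟨h2, h1⟩
  · exact Finset.sdiff_subset

lemma op_reach {G : Pos α} {a b : α} : (op G).Reach a b ↔ G.Reach b a := by
  constructor
  · intro h
    induction h with
    | refl => exact Relation.ReflTransGen.refl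
    | tail _ hcb ih => exact Relation.ReflTransGen.head (mem_op_A.1 hcb) ih
  · intro h
    induction h with
    | refl => exact Relation.ReflTransGen.refl
    | tail _ hcb ih => exact Relation.ReflTransGen.head (mem_op_A.2 hcb) ih

lemma op_Succ {G : Pos α} {z : α} : (op G).Succ z = G.Pred z := by
  ext u; simp only [mem_Succ, mem_Pred, op_V, op_reach]

lemma op_Pred {G : Pos α} {z : α} : (op G).Pred z = G.Succ z := by
  ext u; simp only [mem_Succ, mem_Pred, op_V, op_reach]

lemma op_erase {G : Pos α} {S : Finset α} : op (G.erase S) = (op G).erase S := by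
  refine pos_ext rfl ?_ ?_
  · ext ⟨a, b⟩
    simp only [mem_op_A, mem_erase_A, op_V]
    tauto
  · show (G.V \ S) \ (G.left \ S) = (G.V \ G.left) \ S
    ext z; simp only [Finset.mem_sdiff, not_and, not_not]; tauto

lemma op_ForcL {G : Pos α} : (op G).ForcL = G.ForcR := by
  ext z
  simp only [mem_ForcL, mem_ForcR, op_left, op_Succ]

lemma op_ForcR {G : Pos α} (hwf : G.WF) : (op G).ForcR = G.ForcL := by
  ext z
  simp only [mem_ForcL, mem_ForcR, op_R hwf, op_Pred]

lemma op_Forc {G : Pos α} (hwf : G.WF) : (op G).Forc = G.Forc := by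
  rw [Forc, Forc, op_ForcL, op_ForcR hwf, Finset.union_comm]

lemma op_relevant {G : Pos α} (hwf : G.WF) (hrel : G.Relevant) : (op G).Relevant := by
  rw [Relevant, op_Forc hwf]; exact hrel

lemma op_Rmv {G : Pos α} (hwf : G.WF) (z : α) : (op G).Rmv z = G.Rmv z := by
  classical
  by_cases hzl : z ∈ G.left
  · have h1 : z ∉ (op G).left := by
      rw [op_left, mem_R]; tauto
    rw [Rmv, if_neg h1, Rmv, if_pos hzl, op_Pred, ← op_erase, op_Forc (erase_WF hwf _)]
  · by_cases hzV : z ∈ G.V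
    · have h1 : z ∈ (op G).left := by rw [op_left, mem_R]; exact ⟨hzV, hzl⟩
      rw [Rmv, if_pos h1, Rmv, if_neg hzl, op_Succ, ← op_erase, op_Forc (erase_WF hwf _)]
    · have h1 : z ∉ (op G).left := by rw [op_left, mem_R]; tauto
      rw [Rmv, if_neg h1, Rmv, if_neg hzl, op_Pred,
        Succ_eq_empty hwf hzV, Pred_eq_empty hwf hzV, ← op_erase,
        op_Forc (erase_WF hwf _)]

lemma op_move {G : Pos α} (hwf : G.WF) (z : α) : (op G).move z = op (G.move z) := by
  rw [move, move, op_Rmv hwf, op_erase]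

/-! ### Dual lemmas for Left moves, via `op` -/

lemma mem_Rmv_iff' {G : Pos α} (hwf : G.WF) (hrel : G.Relevant) {x : α} (hx : x ∈ G.left)
    {z : α} : z ∈ G.Rmv x ↔ z ∈ G.V ∧ ∀ u ∈ G.Succ z, u ∉ G.left → u ∈ G.Succ x := by
  have hx' : x ∈ (op G).R := by rw [op_R hwf]; exact hx
  rw [← op_Rmv hwf, mem_Rmv_iff (op_WF hwf) (op_relevant hwf hrel) hx', op_V, op_left]
  simp only [op_Pred, mem_R]
  constructor
  · rintro ⟨hzV, h⟩
    exact ⟨hzV, fun u hu hul => h u hu ⟨Succ_subset_V hu, hul⟩⟩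
  · rintro ⟨hzV, h⟩
    exact ⟨hzV, fun u hu huR => h u hu huR.2⟩

lemma Rmv_subset_V' {G : Pos α} (hwf : G.WF) (hrel : G.Relevant) {x : α} (hx : x ∈ G.left) :
    G.Rmv x ⊆ G.V := fun z hz => ((mem_Rmv_iff' hwf hrel hx).1 hz).1

lemma Succ_subset_Rmv {G : Pos α} (hwf : G.WF) (hrel : G.Relevant) {x : α} (hx : x ∈ G.left) :
    G.Succ x ⊆ G.Rmv x := by
  have hx' : x ∈ (op G).R := by rw [op_R hwf]; exact hx
  rw [← op_Rmv hwf, ← op_Pred]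
  exact Pred_subset_Rmv (op_WF hwf) (op_relevant hwf hrel) hx'

lemma self_mem_Rmv' {G : Pos α} (hwf : G.WF) (hrel : G.Relevant) {x : α} (hx : x ∈ G.left) :
    x ∈ G.Rmv x :=
  Succ_subset_Rmv hwf hrel hx (mem_Succ_self (hwf.2 hx))

lemma Rmv_succClosed {G : Pos α} (hwf : G.WF) (hrel : G.Relevant) {x : α} (hx : x ∈ G.left) :
    G.SuccClosed (G.Rmv x) := by
  have hx' : x ∈ (op G).R := by rw [op_R hwf]; exact hx
  have h := Rmv_predClosed (op_WF hwf) (op_relevant hwf hrel) hx'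
  rw [op_Rmv hwf] at h
  rintro ⟨a, b⟩ hab h1
  exact h (b, a) (mem_op_A.2 hab) h1

/-- Right vertices of `Rmv G x` are successors of `x`. -/
lemma Rmv_inter_R {G : Pos α} (hwf : G.WF) (hrel : G.Relevant) {x : α} (hx : x ∈ G.left)
    {z : α} (hz : z ∈ G.Rmv x) (hzl : z ∉ G.left) : z ∈ G.Succ x := by
  rcases (mem_Rmv_iff' hwf hrel hx).1 hz with ⟨hzV, hcond⟩
  exact hcond z (mem_Succ_self hzV) hzl

lemma card_move_lt_left {G : Pos α} (hwf : G.WF) (hrel : G.Relevant) {x : α}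
    (hx : x ∈ G.left) : (G.move x).V.card < G.V.card := by
  refine Finset.card_lt_card ⟨Finset.sdiff_subset, fun hsub => ?_⟩
  have : x ∈ G.V \ G.Rmv x := hsub (hwf.2 hx)
  exact (Finset.mem_sdiff.1 this).2 (self_mem_Rmv' hwf hrel hx)

lemma move_relevant_left {G : Pos α} (hwf : G.WF) (hrel : G.Relevant) {x : α}
    (hx : x ∈ G.left) : (G.move x).Relevant := by
  have hx' : x ∈ (op G).R := by rw [op_R hwf]; exact hx
  have h := move_relevant_right (op_WF hwf) (op_relevant hwf hrel) hx'
  rw [op_move hwf] at h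
  rw [Relevant, ← op_Forc (move_WF hwf x)]
  exact h

/-! ### Interaction of Rmv with moves -/

/-- After a Right move `y`, the removal set of a surviving Left vertex `x`
restricts exactly. -/
lemma Rmv_move_left {G : Pos α} (hwf : G.WF) (hrel : G.Relevant) {y x : α} (hy : y ∈ G.R)
    (hx : x ∈ G.left) (hxy : x ∉ G.Rmv y) :
    (G.move y).Rmv x = G.Rmv x \ G.Rmv y := by
  have hK : (G.move y).WF := move_WF hwf y
  have hKrel := move_relevant_right hwf hrel hy
  have hcl := Rmv_predClosed hwf hrel hy
  have hxK : x ∈ (G.move y).left := by rw [move_left]; exact Finset.mem_sdiff.2 ⟨hx, hxy⟩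
  ext z
  rw [mem_Rmv_iff' hK hKrel hxK, Finset.mem_sdiff]
  constructor
  · rintro ⟨hzV, hcond⟩
    rw [move_V, Finset.mem_sdiff] at hzV
    have hSz : (G.move y).Succ z = G.Succ z := Succ_erase_of_predClosed hwf hcl hzV.2
    have hSx : (G.move y).Succ x = G.Succ x := Succ_erase_of_predClosed hwf hcl hxy
    refine ⟨(mem_Rmv_iff' hwf hrel hx).2 ⟨hzV.1, fun u hu hul => ?_⟩, hzV.2⟩
    have huRm : u ∉ G.Rmv y := fun h => hzV.2 (hcl.reach (mem_Succ.1 hu).2 h)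
    have := hcond u (by rw [hSz]; exact hu)
      (by rw [move_left, Finset.mem_sdiff]; tauto)
    rwa [hSx] at this
  · rintro ⟨hz, hzy⟩
    rcases (mem_Rmv_iff' hwf hrel hx).1 hz with ⟨hzV, hcond⟩
    have hSz : (G.move y).Succ z = G.Succ z := Succ_erase_of_predClosed hwf hcl hzy
    have hSx : (G.move y).Succ x = G.Succ x := Succ_erase_of_predClosed hwf hcl hxy
    refine ⟨by rw [move_V, Finset.mem_sdiff]; exact ⟨hzV, hzy⟩, fun u hu hul => ?_⟩
    rw [hSz] at hu
    rw [hSx]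
    refine hcond u hu (fun h => hul ?_)
    have huRm : u ∉ G.Rmv y := fun hR => hzy (hcl.reach (mem_Succ.1 hu).2 hR)
    rw [move_left, Finset.mem_sdiff]
    exact ⟨h, huRm⟩

/-- After a Left move `x`, the removal set of a surviving Right vertex `y`
restricts exactly. -/
lemma Rmv_move_right {G : Pos α} (hwf : G.WF) (hrel : G.Relevant) {x y : α} (hx : x ∈ G.left)
    (hy : y ∈ G.R) (hyx : y ∉ G.Rmv x) :
    (G.move x).Rmv y = G.Rmv y \ G.Rmv x := by
  have hx' : x ∈ (op G).R := by rw [op_R hwf]; exact hx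
  have hy' : y ∈ (op G).left := by rw [op_left]; exact hy
  have hyx' : y ∉ (op G).Rmv x := by rw [op_Rmv hwf]; exact hyx
  have h := Rmv_move_left (op_WF hwf) (op_relevant hwf hrel) hx' hy' hyx'
  rw [op_move hwf, op_Rmv (move_WF hwf x), op_Rmv hwf, op_Rmv hwf] at h
  exact h

/-- Cross exclusion: if `y ∈ Rmv G x` then `x ∈ Rmv G y`. -/
lemma mem_Rmv_cross {G : Pos α} (hwf : G.WF) (hrel : G.Relevant) {x y : α} (hx : x ∈ G.left)
    (hy : y ∈ G.R) (h : y ∈ G.Rmv x) : x ∈ G.Rmv y := by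
  have hyS : y ∈ G.Succ x := Rmv_inter_R hwf hrel hx h (mem_R.1 hy).2
  have hxP : x ∈ G.Pred y := mem_Pred.2 ⟨hwf.2 hx, (mem_Succ.1 hyS).2⟩
  exact Pred_subset_Rmv hwf hrel hy hxP

open Classical in
/-- The joint removal set of two Right moves. -/
noncomputable def U2 (G : Pos α) (y y' : α) : Finset α :=
  G.V.filter (fun z => ∀ u ∈ G.Pred z, u ∈ G.left → u ∈ G.Pred y ∨ u ∈ G.Pred y')

lemma mem_U2 {G : Pos α} {y y' z : α} :
    z ∈ G.U2 y y' ↔ z ∈ G.V ∧ ∀ u ∈ G.Pred z, u ∈ G.left → u ∈ G.Pred y ∨ u ∈ G.Pred y' := by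
  classical simp [U2, Finset.mem_filter]

lemma U2_comm {G : Pos α} {y y' : α} : G.U2 y y' = G.U2 y' y := by
  ext z; rw [mem_U2, mem_U2]
  exact and_congr_right (fun _ => forall₃_congr (fun _ _ _ => or_comm))

/-- If `y' ∈ Rmv G y` then the joint removal set is just `Rmv G y`. -/
lemma U2_eq_Rmv {G : Pos α} (hwf : G.WF) (hrel : G.Relevant) {y y' : α} (hy : y ∈ G.R)
    (hy' : y' ∈ G.R) (h : y' ∈ G.Rmv y) : G.U2 y y' = G.Rmv y := by
  have hchar := (mem_Rmv_iff hwf hrel hy).1 h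
  ext z
  rw [mem_U2, mem_Rmv_iff hwf hrel hy]
  refine and_congr_right (fun _ => forall₃_congr (fun u hu hul => ?_))
  constructor
  · rintro (h1 | h1)
    · exact h1
    · exact hchar.2 u h1 hul
  · exact Or.inl

/-- Double Right move: removing `y` then `y'` erases exactly `U2 G y y'`. -/
lemma double_right_move {G : Pos α} (hwf : G.WF) (hrel : G.Relevant) {y y' : α}
    (hy : y ∈ G.R) (hy' : y' ∈ G.R) (h : y' ∉ G.Rmv y) :
    (G.move y).move y' = G.erase (G.U2 y y') := by
  have hK : (G.move y).WF := move_WF hwf y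
  have hKrel := move_relevant_right hwf hrel hy
  have hcl := Rmv_predClosed hwf hrel hy
  have hy'K : y' ∈ (G.move y).R := by rw [move_R]; exact Finset.mem_sdiff.2 ⟨hy', h⟩
  show ((G.erase (G.Rmv y)).erase ((G.move y).Rmv y')) = _
  rw [erase_erase]
  congr 1
  ext z
  rw [Finset.mem_union, mem_U2]
  constructor
  · rintro (hz | hz)
    · rcases (mem_Rmv_iff hwf hrel hy).1 hz with ⟨hzV, hcond⟩
      exact ⟨hzV, fun u hu hul => Or.inl (hcond u hu hul)⟩
    · rcases (mem_Rmv_iff hK hKrel hy'K).1 hz with ⟨hzV, hcond⟩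
      rw [move_V, Finset.mem_sdiff] at hzV
      refine ⟨hzV.1, fun u hu hul => ?_⟩
      by_cases huRm : u ∈ G.Rmv y
      · exact Or.inl (Rmv_inter_left hwf hrel hy huRm hul)
      · refine Or.inr ?_
        have h1 : u ∈ (G.move y).Pred z := by
          rw [move, Pred_erase_of_predClosed hwf hcl]
          exact Finset.mem_sdiff.2 ⟨hu, huRm⟩
        have h2 : u ∈ (G.move y).left := by
          rw [move_left]; exact Finset.mem_sdiff.2 ⟨hul, huRm⟩
        have := hcond u h1 h2
        rw [move, Pred_erase_of_predClosed hwf hcl, Finset.mem_sdiff] at this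
        exact this.1
  · rintro ⟨hzV, hcond⟩
    by_cases hzRm : z ∈ G.Rmv y
    · exact Or.inl hzRm
    · refine Or.inr ((mem_Rmv_iff hK hKrel hy'K).2 ⟨?_, ?_⟩)
      · rw [move_V]; exact Finset.mem_sdiff.2 ⟨hzV, hzRm⟩
      · intro u hu hul
        rw [move, Pred_erase_of_predClosed hwf hcl, Finset.mem_sdiff] at hu
        rw [move_left, Finset.mem_sdiff] at hul
        rcases hcond u hu.1 hul.1 with h1 | h1
        · exact absurd (Pred_subset_Rmv hwf hrel hy h1) hu.2
        · rw [move, Pred_erase_of_predClosed hwf hcl]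
          exact Finset.mem_sdiff.2 ⟨h1, hu.2⟩

/-- Cross commutation of a Left and a Right move. -/
lemma double_cross_move {G : Pos α} (hwf : G.WF) (hrel : G.Relevant) {x y : α}
    (hx : x ∈ G.left) (hy : y ∈ G.R) (hxy : x ∉ G.Rmv y) :
    (G.move y).move x = (G.move x).move y := by
  have hyx : y ∉ G.Rmv x := fun h => hxy (mem_Rmv_cross hwf hrel hx hy h)
  show ((G.erase (G.Rmv y)).erase ((G.move y).Rmv x))
      = ((G.erase (G.Rmv x)).erase ((G.move x).Rmv y))
  rw [erase_erase, erase_erase, Rmv_move_left hwf hrel hy hx hxy,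
    Rmv_move_right hwf hrel hx hy hyx, Finset.union_sdiff_self_eq_union,
    Finset.union_sdiff_self_eq_union, Finset.union_comm]

/-! ### Fuel lemmas -/

lemma self_mem_Rmv_raw_left {G : Pos α} (hwf : G.WF) {x : α} (hx : x ∈ G.left) :
    x ∈ G.Rmv x := by
  classical
  rw [Rmv, if_pos hx]
  exact Finset.mem_union_left _ (mem_Succ_self (hwf.2 hx))

lemma self_mem_Rmv_raw_right {G : Pos α} {y : α} (hy : y ∈ G.R) : y ∈ G.Rmv y := by
  classical
  rw [Rmv, if_neg (mem_R.1 hy).2]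
  exact Finset.mem_union_left _ (mem_Pred_self (mem_R.1 hy).1)

lemma card_move_lt_raw_left {G : Pos α} (hwf : G.WF) {x : α} (hx : x ∈ G.left) :
    (G.move x).V.card < G.V.card := by
  refine Finset.card_lt_card ⟨Finset.sdiff_subset, fun hsub => ?_⟩
  have : x ∈ G.V \ G.Rmv x := hsub (hwf.2 hx)
  exact (Finset.mem_sdiff.1 this).2 (self_mem_Rmv_raw_left hwf hx)

lemma card_move_lt_raw_right {G : Pos α} {y : α} (hy : y ∈ G.R) :
    (G.move y).V.card < G.V.card := by
  refine Finset.card_lt_card ⟨Finset.sdiff_subset, fun hsub => ?_⟩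
  have : y ∈ G.V \ G.Rmv y := hsub (mem_R.1 hy).1
  exact (Finset.mem_sdiff.1 this).2 (self_mem_Rmv_raw_right hy)

lemma aux_step (k : ℕ) : ∀ G : Pos α, G.WF → G.V.card ≤ k →
    sL1Aux (k + 1) G = sL1Aux k G ∧ sL2Aux (k + 1) G = sL2Aux k G ∧
    sR1Aux (k + 1) G = sR1Aux k G ∧ sR2Aux (k + 1) G = sR2Aux k G := by
  induction k with
  | zero =>
    intro G hwf hcard
    have hV : G.V = ∅ := Finset.card_eq_zero.1 (Nat.le_zero.1 hcard)
    have hL : G.left = ∅ := Finset.subset_empty.1 (hV ▸ hwf.2)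
    have hR : G.R = ∅ := by rw [R, hV]; exact Finset.empty_sdiff _
    refine ⟨?_, ?_, ?_, ?_⟩ <;>
      simp [sL1Aux, sL2Aux, sR1Aux, sR2Aux, hL, hR, Finset.not_nonempty_empty]
  | succ k ih =>
    intro G hwf hcard
    have hL : ∀ x ∈ G.left, (G.move x).V.card ≤ k := fun x hx => by
      have := card_move_lt_raw_left hwf hx; omega
    have hRc : ∀ y ∈ G.R, (G.move y).V.card ≤ k := fun y hy => by
      have := card_move_lt_raw_right hy; omega
    refine ⟨?_, ?_, ?_, ?_⟩
    · show (if G.left.Nonempty then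
          G.left.sup (fun x => (G.Rmv x).card + sL2Aux (k + 1) (G.move x)) else 0) = _
      by_cases h : G.left.Nonempty
      · rw [if_pos h, sL1Aux, if_pos h]
        exact Finset.sup_congr rfl (fun x hx => by
          rw [(ih _ (move_WF hwf x) (hL x hx)).2.1])
      · rw [if_neg h, sL1Aux, if_neg h]
    · show (if h : G.R.Nonempty then G.R.inf' h (fun y => sL1Aux (k + 1) (G.move y))
          else 0) = _
      by_cases h : G.R.Nonempty
      · rw [dif_pos h, sL2Aux, dif_pos h]
        exact Finset.inf'_congr h rfl (fun y hy => (ih _ (move_WF hwf y) (hRc y hy)).1)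
      · rw [dif_neg h, sL2Aux, dif_neg h]
    · show (if G.R.Nonempty then
          G.R.sup (fun y => (G.Rmv y).card + sR2Aux (k + 1) (G.move y)) else 0) = _
      by_cases h : G.R.Nonempty
      · rw [if_pos h, sR1Aux, if_pos h]
        exact Finset.sup_congr rfl (fun y hy => by
          rw [(ih _ (move_WF hwf y) (hRc y hy)).2.2.2])
      · rw [if_neg h, sR1Aux, if_neg h]
    · show (if h : G.left.Nonempty then G.left.inf' h (fun x => sR1Aux (k + 1) (G.move x))
          else 0) = _
      by_cases h : G.left.Nonempty
      · rw [dif_pos h, sR2Aux, dif_pos h]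
        exact Finset.inf'_congr h rfl (fun x hx => (ih _ (move_WF hwf x) (hL x hx)).2.2.1)
      · rw [dif_neg h, sR2Aux, dif_neg h]

lemma aux_eq {G : Pos α} (hwf : G.WF) {k : ℕ} (h : G.V.card ≤ k) :
    sL1Aux k G = G.sL1 ∧ sL2Aux k G = G.sL2 ∧ sR1Aux k G = G.sR1 ∧ sR2Aux k G = G.sR2 := by
  induction k with
  | zero =>
    have h0 : G.V.card = 0 := Nat.le_zero.1 h
    rw [sL1, sL2, sR1, sR2, h0]
    exact ⟨rfl, rfl, rfl, rfl⟩
  | succ k ih =>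
    rcases Nat.lt_or_ge k G.V.card with hk | hk
    · have : G.V.card = k + 1 := by omega
      rw [sL1, sL2, sR1, sR2, this]
      exact ⟨rfl, rfl, rfl, rfl⟩
    · have hs := aux_step k G hwf hk
      have hi := ih hk
      exact ⟨hs.1.trans hi.1, hs.2.1.trans hi.2.1, hs.2.2.1.trans hi.2.2.1,
        hs.2.2.2.trans hi.2.2.2⟩

/-! ### Spec lemmas -/

lemma sL1_spec {G : Pos α} (hwf : G.WF) :
    G.sL1 = if G.left.Nonempty then
      G.left.sup (fun x => (G.Rmv x).card + (G.move x).sL2) else 0 := by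
  cases hc : G.V.card with
  | zero =>
    have hV : G.V = ∅ := Finset.card_eq_zero.1 hc
    have hL : G.left = ∅ := Finset.subset_empty.1 (hV ▸ hwf.2)
    rw [sL1, hc, hL]
    simp [sL1Aux, Finset.not_nonempty_empty]
  | succ m =>
    rw [sL1, hc]
    show (if G.left.Nonempty then
        G.left.sup (fun x => (G.Rmv x).card + sL2Aux m (G.move x)) else 0) = _
    by_cases h : G.left.Nonempty
    · rw [if_pos h, if_pos h]
      refine Finset.sup_congr rfl (fun x hx => ?_)
      have : (G.move x).V.card ≤ m := by
        have := card_move_lt_raw_left hwf hx; omega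
      rw [(aux_eq (move_WF hwf x) this).2.1]
    · rw [if_neg h, if_neg h]

lemma sL2_spec {G : Pos α} (hwf : G.WF) :
    G.sL2 = if h : G.R.Nonempty then G.R.inf' h (fun y => (G.move y).sL1) else 0 := by
  cases hc : G.V.card with
  | zero =>
    have hV : G.V = ∅ := Finset.card_eq_zero.1 hc
    have hR : G.R = ∅ := by rw [R, hV]; exact Finset.empty_sdiff _
    rw [sL2, hc, hR]
    simp [sL2Aux, Finset.not_nonempty_empty]
  | succ m =>
    rw [sL2, hc]
    show (if h : G.R.Nonempty then G.R.inf' h (fun y => sL1Aux m (G.move y)) else 0) = _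
    by_cases h : G.R.Nonempty
    · rw [dif_pos h, dif_pos h]
      refine Finset.inf'_congr h rfl (fun y hy => ?_)
      have : (G.move y).V.card ≤ m := by
        have := card_move_lt_raw_right hy; omega
      rw [(aux_eq (move_WF hwf y) this).1]
    · rw [dif_neg h, dif_neg h]

/-! ### Bound lemmas -/

lemma le_sL1_of_mem {G : Pos α} (hwf : G.WF) {x : α} (hx : x ∈ G.left) :
    (G.Rmv x).card + (G.move x).sL2 ≤ G.sL1 := by
  rw [sL1_spec hwf, if_pos ⟨x, hx⟩]
  exact Finset.le_sup (f := fun x => (G.Rmv x).card + (G.move x).sL2) hx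

lemma sL1_le {G : Pos α} (hwf : G.WF) {n : ℕ}
    (h : ∀ x ∈ G.left, (G.Rmv x).card + (G.move x).sL2 ≤ n) : G.sL1 ≤ n := by
  rw [sL1_spec hwf]
  by_cases hL : G.left.Nonempty
  · rw [if_pos hL]; exact Finset.sup_le h
  · rw [if_neg hL]; exact Nat.zero_le n

lemma sL2_le_of_mem {G : Pos α} (hwf : G.WF) {y : α} (hy : y ∈ G.R) :
    G.sL2 ≤ (G.move y).sL1 := by
  rw [sL2_spec hwf, dif_pos ⟨y, hy⟩]
  exact Finset.inf'_le _ hy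

lemma le_sL2 {G : Pos α} (hwf : G.WF) {n : ℕ} (hR : G.R.Nonempty)
    (h : ∀ y ∈ G.R, n ≤ (G.move y).sL1) : n ≤ G.sL2 := by
  rw [sL2_spec hwf, dif_pos hR]
  exact Finset.le_inf' hR _ h

lemma sL2_eq_zero {G : Pos α} (hwf : G.WF) (hR : ¬ G.R.Nonempty) : G.sL2 = 0 := by
  rw [sL2_spec hwf, dif_neg hR]

/-! ### Scores and op -/

lemma op_aux (k : ℕ) : ∀ G : Pos α, G.WF →
    sL1Aux k (op G) = sR1Aux k G ∧ sL2Aux k (op G) = sR2Aux k G := by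
  induction k with
  | zero => exact fun G _ => ⟨rfl, rfl⟩
  | succ k ih =>
    intro G hwf
    constructor
    · rw [sL1Aux, sR1Aux, op_left]
      by_cases h : G.R.Nonempty
      · rw [if_pos h, if_pos h]
        refine Finset.sup_congr rfl (fun y hy => ?_)
        rw [op_Rmv hwf, op_move hwf, (ih _ (move_WF hwf y)).2]
      · rw [if_neg h, if_neg h]
    · rw [sL2Aux, sR2Aux]
      have hR : (op G).R = G.left := op_R hwf
      by_cases h : G.left.Nonempty
      · have h' : (op G).R.Nonempty := by rw [hR]; exact h
        rw [dif_pos h', dif_pos h]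
        refine Finset.inf'_congr h' hR (fun x hx => ?_)
        rw [op_move hwf, (ih _ (move_WF hwf x)).1]
      · have h' : ¬ (op G).R.Nonempty := by rw [hR]; exact h
        rw [dif_neg h', dif_neg h]

lemma sR1_eq_op {G : Pos α} (hwf : G.WF) : G.sR1 = (op G).sL1 := by
  rw [sR1, sL1, op_V, (op_aux G.V.card G hwf).1]

/-! ### Main monotonicity: a Right move cannot increase Left's scores -/

lemma main_pack : ∀ n : ℕ, ∀ G : Pos α, G.V.card ≤ n → G.WF → G.Relevant →
    (∀ y ∈ G.R, (G.move y).sL1 ≤ G.sL1) ∧ (∀ y ∈ G.R, (G.move y).sL2 ≤ G.sL2) ∧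
    G.sL2 ≤ G.sL1 := by
  intro n
  induction n with
  | zero =>
    intro G hc hwf _
    have hV : G.V = ∅ := Finset.card_eq_zero.1 (Nat.le_zero.1 hc)
    have hR : G.R = ∅ := by rw [R, hV]; exact Finset.empty_sdiff _
    refine ⟨?_, ?_, ?_⟩
    · intro y hy; rw [hR] at hy; exact absurd hy (Finset.notMem_empty y)
    · intro y hy; rw [hR] at hy; exact absurd hy (Finset.notMem_empty y)
    · rw [sL2_eq_zero hwf (by rw [hR]; exact Finset.not_nonempty_empty)]
      exact Nat.zero_le _
  | succ n ih =>
    intro G hc hwf hrel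
    have hM1 : ∀ y ∈ G.R, (G.move y).sL1 ≤ G.sL1 := by
      intro y hy
      have hKwf : (G.move y).WF := move_WF hwf y
      refine sL1_le hKwf (fun x hxK => ?_)
      rw [move_left, Finset.mem_sdiff] at hxK
      obtain ⟨hx, hxy⟩ := hxK
      have hyx : y ∉ G.Rmv x := fun h => hxy (mem_Rmv_cross hwf hrel hx hy h)
      have hrmv : (G.move y).Rmv x = G.Rmv x \ G.Rmv y :=
        Rmv_move_left hwf hrel hy hx hxy
      have hcomm : (G.move y).move x = (G.move x).move y :=
        double_cross_move hwf hrel hx hy hxy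
      have hcard : ((G.move y).Rmv x).card ≤ (G.Rmv x).card := by
        rw [hrmv]; exact Finset.card_le_card Finset.sdiff_subset
      have hGx_card : (G.move x).V.card ≤ n := by
        have := card_move_lt_raw_left hwf hx; omega
      have hyGx : y ∈ (G.move x).R := by
        rw [move_R]; exact Finset.mem_sdiff.2 ⟨hy, hyx⟩
      have h2 := (ih (G.move x) hGx_card (move_WF hwf x)
        (move_relevant_left hwf hrel hx)).2.1 y hyGx
      calc ((G.move y).Rmv x).card + ((G.move y).move x).sL2
          ≤ (G.Rmv x).card + (G.move x).sL2 := by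
            rw [hcomm]; exact Nat.add_le_add hcard h2
        _ ≤ G.sL1 := le_sL1_of_mem hwf hx
    have hM2 : ∀ y ∈ G.R, (G.move y).sL2 ≤ G.sL2 := by
      intro y hy
      have hRne : G.R.Nonempty := ⟨y, hy⟩
      rw [sL2_spec hwf, dif_pos hRne]
      refine Finset.le_inf' hRne _ (fun y' hy' => ?_)
      have hwf' : (G.move y').WF := move_WF hwf y'
      have hrel' : (G.move y').Relevant := move_relevant_right hwf hrel hy'
      have hcard' : (G.move y').V.card ≤ n := by
        have := card_move_lt_raw_right hy'; omega
      have hKwf : (G.move y).WF := move_WF hwf y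
      by_cases h1 : y' ∈ G.Rmv y
      · by_cases h2 : y ∈ G.Rmv y'
        · have heq : G.Rmv y = G.Rmv y' := by
            rw [← U2_eq_Rmv hwf hrel hy hy' h1, U2_comm, U2_eq_Rmv hwf hrel hy' hy h2]
          rw [show G.move y = G.move y' from by rw [move, move, heq]]
          exact (ih _ hcard' hwf' hrel').2.2
        · have hdd : (G.move y').move y = G.move y := by
            rw [double_right_move hwf hrel hy' hy h2, U2_comm,
              U2_eq_Rmv hwf hrel hy hy' h1, move]
          have hyK' : y ∈ (G.move y').R := by
            rw [move_R]; exact Finset.mem_sdiff.2 ⟨hy, h2⟩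
          rw [← hdd]
          exact ((ih _ hcard' hwf' hrel').2.1 y hyK').trans (ih _ hcard' hwf' hrel').2.2
      · have hy'K : y' ∈ (G.move y).R := by
          rw [move_R]; exact Finset.mem_sdiff.2 ⟨hy', h1⟩
        have step1 : (G.move y).sL2 ≤ ((G.move y).move y').sL1 := sL2_le_of_mem hKwf hy'K
        by_cases h2 : y ∈ G.Rmv y'
        · have heq : (G.move y).move y' = G.move y' := by
            rw [double_right_move hwf hrel hy hy' h1, U2_comm,
              U2_eq_Rmv hwf hrel hy' hy h2, move]
          rw [heq] at step1
          exact step1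
        · have hcomm : (G.move y).move y' = (G.move y').move y := by
            rw [double_right_move hwf hrel hy hy' h1,
              double_right_move hwf hrel hy' hy h2, U2_comm]
          have hyK' : y ∈ (G.move y').R := by
            rw [move_R]; exact Finset.mem_sdiff.2 ⟨hy, h2⟩
          rw [hcomm] at step1
          exact step1.trans ((ih _ hcard' hwf' hrel').1 y hyK')
    refine ⟨hM1, hM2, ?_⟩
    by_cases hR : G.R.Nonempty
    · obtain ⟨y, hy⟩ := hR
      exact (sL2_le_of_mem hwf hy).trans (hM1 y hy)
    · rw [sL2_eq_zero hwf hR]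
      exact Nat.zero_le _

/-- Included Right moves cannot be better. -/
lemma included_right {G : Pos α} (hwf : G.WF) (hrel : G.Relevant) {y y' : α}
    (hy : y ∈ G.R) (hy' : y' ∈ G.R) (hmem : y' ∈ G.Rmv y) :
    (G.move y).sL1 ≤ (G.move y').sL1 := by
  have hwf' : (G.move y').WF := move_WF hwf y'
  have hrel' : (G.move y').Relevant := move_relevant_right hwf hrel hy'
  by_cases h2 : y ∈ G.Rmv y'
  · have heq : G.Rmv y = G.Rmv y' := by
      rw [← U2_eq_Rmv hwf hrel hy hy' hmem, U2_comm, U2_eq_Rmv hwf hrel hy' hy h2]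
    rw [show G.move y = G.move y' from by rw [move, move, heq]]
  · have hdd : (G.move y').move y = G.move y := by
      rw [double_right_move hwf hrel hy' hy h2, U2_comm,
        U2_eq_Rmv hwf hrel hy hy' hmem, move]
    have hyK' : y ∈ (G.move y').R := by
      rw [move_R]; exact Finset.mem_sdiff.2 ⟨hy, h2⟩
    rw [← hdd]
    exact (main_pack (G.move y').V.card _ le_rfl hwf' hrel').1 y hyK'


end Pos

/-- The sum of a finite list of positions. -/
def sumList (l : List (Pos α)) : Pos α := l.foldr Pos.union Pos.empty

open Classical in
/-- `G` is a segment: its vertex set is a set of at least two consecutive integers,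
Left's vertices are the even ones, Right's the odd ones, and there is an arc from each
even vertex to each of its (odd) neighbours `±1` lying in the vertex set. -/
def IsSegment (G : Pos ℤ) : Prop :=
  2 ≤ G.V.card ∧
  (∀ i j k : ℤ, i ∈ G.V → j ∈ G.V → i ≤ k → k ≤ j → k ∈ G.V) ∧
  G.left = G.V.filter (fun n => Even n) ∧
  G.A = (G.V ×ˢ G.V).filter (fun p => Even p.1 ∧ (p.2 = p.1 + 1 ∨ p.2 = p.1 - 1))

/-- `G` is the finite disjoint union (game sum) of the list `l` of segments. -/
def IsSegUnion (G : Pos ℤ) (l : List (Pos ℤ)) : Prop :=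
  (∀ H ∈ l, IsSegment H) ∧
  l.Pairwise (fun H H' => Disjoint H.V H'.V) ∧
  G = sumList l


open Classical in
/-- `G` is an alternated cycle: obtained from a segment `S` with an even number of
vertices by adding the arc `(x, y)` where `x` is the endpoint of `S` in `L` (even) and
`y` the endpoint in `R` (odd). -/
def IsAltCycle (G : Pos ℤ) : Prop :=
  ∃ (S : Pos ℤ) (x y : ℤ), IsSegment S ∧ Even S.V.card ∧
    x ∈ S.V ∧ y ∈ S.V ∧ Even x ∧ ¬ Even y ∧
    (∀ z ∈ S.V, min x y ≤ z ∧ z ≤ max x y) ∧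
    G.V = S.V ∧ G.left = S.left ∧ G.A = insert (x, y) S.A

open Classical in
/-- `T` is (a copy of) the oriented tree `T_n^c`: a rooted tree of depth `n+1`, all arcs
oriented from parent to child, in which every vertex at level `k ≤ n-1` has exactly `3`
children, every vertex at level `n` has exactly `c` children, the leaves (level `n+1`)
are the Right vertices and all other vertices are Left vertices. -/
def IsTnc (n c : ℕ) (T : Pos α) : Prop :=
  T.WF ∧ ∃ lvl : α → ℕ,
    (∀ v ∈ T.V, lvl v ≤ n + 1) ∧
    T.left = T.V.filter (fun v => lvl v ≤ n) ∧
    (∃! r, r ∈ T.V ∧ lvl r = 0) ∧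
    (∀ p ∈ T.A, lvl p.2 = lvl p.1 + 1) ∧
    (∀ v ∈ T.V, 0 < lvl v → ∃! u, (u, v) ∈ T.A) ∧
    (∀ v ∈ T.V, lvl v < n → (T.V.filter (fun w => (v, w) ∈ T.A)).card = 3) ∧
    (∀ v ∈ T.V, lvl v = n → (T.V.filter (fun w => (v, w) ∈ T.A)).card = c)

/-- `J` is (a copy of) `J_n^c`, the disjoint union of two disjoint copies of `T_n^c`. -/
def IsJnc (n c : ℕ) (J : Pos α) : Prop :=
  ∃ T1 T2 : Pos α, IsTnc n c T1 ∧ IsTnc n c T2 ∧ Disjoint T1.V T2.V ∧ J = T1.union T2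

end Influence

open Influence Influence.Pos Finset

/-- included moves cannot be better. -/
theorem influence_included_moves {α : Type} [DecidableEq α] (G : Pos α)
    (hwf : G.WF) (hrel : G.Relevant) :
    (∀ y ∈ G.R, ∀ y' ∈ G.R, y' ∈ G.Rmv y → (G.move y).sL1 ≤ (G.move y').sL1) ∧
    (∀ x ∈ G.left, ∀ x' ∈ G.left, x' ∈ G.Rmv x → (G.move x).sR1 ≤ (G.move x').sR1) := by
  constructor
  · intro y hy y' hy' hmem
    exact included_right hwf hrel hy hy' hmem
  · intro x hx x' hx' hmem
    have hwfo := op_WF hwf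
    have hrelo := op_relevant hwf hrel
    have hx1 : x ∈ (Pos.op G).R := by rw [op_R hwf]; exact hx
    have hx1' : x' ∈ (Pos.op G).R := by rw [op_R hwf]; exact hx'
    have hmem' : x' ∈ (Pos.op G).Rmv x := by rw [op_Rmv hwf]; exact hmem
    have h := included_right hwfo hrelo hx1 hx1' hmem'
    rw [op_move hwf, op_move hwf] at h
    rw [sR1_eq_op (move_WF hwf x), sR1_eq_op (move_WF hwf x')]
    exact h
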